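/- Let N_X be a K-order network over a finite nonempty set X having the symmetry and identity properties and satisfying the order increasing property. Then for any 0 ≤ k̃ ≤ k ≤ K, any tuple x_{0:k} ∈ X^{k+1}, and any indices l_0,…,l_{k̃} ∈ {0,…,k}, one has r_X^{k̃}(x_{l_0},…,x_{l_{k̃}}) ≤ r_X^k(x_{0:k}); that is, the relationship value of any sub-tuple is at most the relationship value of the full tuple. -/

import Mathlib

/-- The relationship functions of a `K`-order network over node set `X`:
for each order `k`, a real-valued function on `(k+1)`-tuples of nodes
(only the functions of order `k ≤ K` are relevant). -/
abbrev RelFun (X : Type*) : Type _ := (k : ℕ) → (Fin (k + 1) → X) → ℝ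

/-- The relationship functions of orders `0 ≤ k ≤ K` take values in `[0,1]`. -/
def RangeUnit {X : Type*} (K : ℕ) (r : RelFun X) : Prop :=
  ∀ k, k ≤ K → ∀ x : Fin (k + 1) → X, r k x ∈ Set.Icc (0 : ℝ) 1

/-- Symmetry property: the relationship value is invariant under reorderings of the tuple. -/
def SymmetricNet {X : Type*} (K : ℕ) (r : RelFun X) : Prop :=
  ∀ k, k ≤ K → ∀ (x : Fin (k + 1) → X) (σ : Equiv.Perm (Fin (k + 1))),
    r k (x ∘ σ) = r k x

/-- Identity property: a sub-tuple with the same set of distinct elements as the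
full tuple has the same relationship value. -/
def IdentityNet {X : Type*} (K : ℕ) (r : RelFun X) : Prop :=
  ∀ k k', k ≤ K → k' ≤ K → ∀ (x : Fin (k + 1) → X) (l : Fin (k' + 1) → Fin (k + 1)),
    Set.range (x ∘ l) = Set.range x → r k' (x ∘ l) = r k x

/-- (Weak) order increasing property: `r^k(x_{0:k}) ≥ r^{k-1}(x_{0:k-1})`. -/
def OrderIncreasing {X : Type*} (K : ℕ) (r : RelFun X) : Prop :=
  ∀ k, k + 1 ≤ K → ∀ x : Fin (k + 2) → X,
    r k (fun i => x i.castSucc) ≤ r (k + 1) x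

/-- Aux: extension along the canonical prefix embedding only increases the value. -/
lemma prefix_le_aux {X : Type*} (K : ℕ) (r : RelFun X) (hInc : OrderIncreasing K r)
    (k' : ℕ) : ∀ k (h1 : k' ≤ k), k ≤ K → ∀ y : Fin (k + 1) → X,
      r k' (y ∘ Fin.castLE (Nat.succ_le_succ h1)) ≤ r k y := by
  intro k
  induction k with
  | zero =>
    intro h1 _ y
    interval_cases k'
    have : y ∘ Fin.castLE (Nat.succ_le_succ (le_refl 0)) = y := by
      funext i; simp [Fin.castLE]
    rw [this]
  | succ k ih =>
    intro h1 h2 y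
    rcases Nat.lt_or_ge k' (k + 1) with h | h
    · have hk' : k' ≤ k := by omega
      have step : r k (fun i => y i.castSucc) ≤ r (k + 1) y := hInc k h2 y
      have ihy := ih hk' (by omega) (fun i => y i.castSucc)
      have heq : ((fun i : Fin (k+1) => y i.castSucc) ∘ Fin.castLE (Nat.succ_le_succ hk'))
          = y ∘ Fin.castLE (Nat.succ_le_succ h1) := by
        funext i
        simp [Function.comp, Fin.castSucc, Fin.castLE, Fin.castAdd, Fin.castLT]
      calc r k' (y ∘ Fin.castLE (Nat.succ_le_succ h1)) = r k' ((fun i : Fin (k+1) => y i.castSucc) ∘ Fin.castLE (Nat.succ_le_succ hk')) := by rw [heq]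
        _ ≤ r k (fun i => y i.castSucc) := ihy
        _ ≤ r (k + 1) y := step
    · have : k' = k + 1 := by omega
      subst this
      have : y ∘ Fin.castLE (Nat.succ_le_succ (le_refl (k + 1))) = y := by
        funext i; simp [Fin.castLE]
      rw [this]

/-- For a `K`-order network with the symmetry, identity, and order increasing
properties, the relationship value of any sub-tuple `x_{l_0}, …, x_{l_{k̃}}` of a tuple
`x_{0:k}` is at most the relationship value of the full tuple. -/
theorem subtuple_le {X : Type*} [Fintype X] [Nonempty X] (K : ℕ) (r : RelFun X)
    (hRange : RangeUnit K r) (hSym : SymmetricNet K r) (hId : IdentityNet K r)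
    (hInc : OrderIncreasing K r) :
    ∀ (k' k : ℕ), k' ≤ k → k ≤ K → ∀ (x : Fin (k + 1) → X) (l : Fin (k' + 1) → Fin (k + 1)),
      r k' (x ∘ l) ≤ r k x := by
  classical
  intro k' k hk'k hkK x l
  set y : Fin (k' + 1) → X := x ∘ l with hy
  -- the set of values of the subtuple
  set t : Finset X := Finset.image y Finset.univ with ht
  have hyt : ∀ a, y a ∈ t := fun a => Finset.mem_image.2 ⟨a, Finset.mem_univ _, rfl⟩
  have htne : t.Nonempty := ⟨y 0, hyt 0⟩
  obtain ⟨j, hj⟩ : ∃ j, t.card = j + 1 :=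
    ⟨t.card - 1, (Nat.succ_pred_eq_of_pos htne.card_pos).symm⟩
  have hjk' : j ≤ k' := by
    have h1 : t.card ≤ (Finset.univ : Finset (Fin (k' + 1))).card := Finset.card_image_le
    simp [Finset.card_univ] at h1
    omega
  -- enumerate the values
  set L : List X := t.toList with hL
  have hLlen : L.length = j + 1 := by rw [hL, Finset.length_toList, hj]
  have hLnd : L.Nodup := t.nodup_toList
  have hLmem : ∀ w, w ∈ L ↔ w ∈ t := fun w => Finset.mem_toList
  set v : Fin (j + 1) → X := fun i => L.get (Fin.cast hLlen.symm i) with hv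
  have hvinj : Function.Injective v := by
    intro a b hab
    have := List.nodup_iff_injective_get.1 hLnd hab
    exact Fin.cast_injective _ this
  have hvrange : ∀ w, w ∈ t ↔ ∃ i, v i = w := by
    intro w
    constructor
    · intro hw
      obtain ⟨i, hi⟩ := List.get_of_mem ((hLmem w).2 hw)
      exact ⟨Fin.cast hLlen i, by simpa [hv] using hi⟩
    · rintro ⟨i, rfl⟩
      exact (hLmem _).1 (L.get_mem _)
  -- choose preimages in Fin (k'+1)
  have hm' : ∀ i : Fin (j + 1), ∃ a : Fin (k' + 1), y a = v i := by
    intro i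
    have : v i ∈ t := (hLmem _).1 (L.get_mem _)
    obtain ⟨a, -, ha⟩ := Finset.mem_image.1 this
    exact ⟨a, ha⟩
  choose m hm using hm'
  have hym : y ∘ m = v := funext fun i => hm i
  have hrange1 : Set.range (y ∘ m) = Set.range y := by
    ext w
    constructor
    · rintro ⟨i, rfl⟩; exact ⟨m i, rfl⟩
    · rintro ⟨a, rfl⟩
      obtain ⟨i, hi⟩ := (hvrange (y a)).1 (hyt a)
      exact ⟨i, by rw [hym]; exact hi⟩
  have hid1 : r j (y ∘ m) = r k' y :=
    hId k' j (le_trans hk'k hkK) (by omega) y m hrange1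
  -- now the injective index map into Fin (k+1)
  set n : Fin (j + 1) → Fin (k + 1) := l ∘ m with hn
  have hxn : x ∘ n = v := hym
  -- missing values
  set T : Finset X := Finset.image x Finset.univ with hT
  have hxT : ∀ a, x a ∈ T := fun a => Finset.mem_image.2 ⟨a, Finset.mem_univ _, rfl⟩
  have htT : t ⊆ T := by
    intro w hw
    obtain ⟨a, -, rfl⟩ := Finset.mem_image.1 hw
    exact hxT (l a)
  have hTcard : T.card ≤ k + 1 := by
    have h1 : T.card ≤ (Finset.univ : Finset (Fin (k + 1))).card := Finset.card_image_le
    simpa [Finset.card_univ] using h1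
  set S : Finset X := T \ t with hS
  set M : List X := S.toList with hM
  have hMlen : M.length ≤ k - j := by
    have h1 : S.card = T.card - t.card := Finset.card_sdiff_of_subset htT
    have : M.length = S.card := Finset.length_toList S
    omega
  have hMmem : ∀ w, w ∈ M ↔ w ∈ S := fun w => Finset.mem_toList
  have hp' : ∀ q : Fin M.length, ∃ a : Fin (k + 1), x a = M.get q := by
    intro q
    have : M.get q ∈ S := (hMmem _).1 (M.get_mem _)
    obtain ⟨a, -, ha⟩ := Finset.mem_image.1 (Finset.mem_sdiff.1 this).1
    exact ⟨a, ha⟩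
  choose p hp using hp'
  -- the extended index map
  set lhat : Fin (k + 1) → Fin (k + 1) := fun i =>
    if h : (i : ℕ) < j + 1 then n ⟨i, h⟩
    else if h2 : (i : ℕ) - (j + 1) < M.length then p ⟨(i : ℕ) - (j + 1), h2⟩
    else n 0 with hlhat
  have hpre : (x ∘ lhat) ∘ Fin.castLE (by omega : j + 1 ≤ k + 1) = x ∘ n := by
    funext i
    have hi : ((Fin.castLE (by omega : j + 1 ≤ k + 1) i : Fin (k+1)) : ℕ) < j + 1 := i.isLt
    simp only [Function.comp, hlhat, dif_pos hi]
    congr 1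
  have hrange2 : Set.range (x ∘ lhat) = Set.range x := by
    apply Set.Subset.antisymm
    · rintro w ⟨i, rfl⟩; exact ⟨lhat i, rfl⟩
    · rintro w ⟨a, rfl⟩
      by_cases hw : x a ∈ t
      · obtain ⟨i, hi⟩ := (hvrange (x a)).1 hw
        refine ⟨Fin.castLE (by omega : j + 1 ≤ k + 1) i, ?_⟩
        have h1 := congrFun hpre i
        have h2 : (x ∘ n) i = x a := by rw [hxn]; exact hi
        simpa using h1.trans h2
      · have hwS : x a ∈ S := Finset.mem_sdiff.2 ⟨hxT a, hw⟩
        obtain ⟨q, hq⟩ := List.get_of_mem ((hMmem _).2 hwS)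
        have hqlt : (q : ℕ) < M.length := q.isLt
        have hidx : j + 1 + (q : ℕ) < k + 1 := by omega
        refine ⟨⟨j + 1 + (q : ℕ), hidx⟩, ?_⟩
        have h1 : ¬ (j + 1 + (q : ℕ) < j + 1) := by omega
        have h2 : j + 1 + (q : ℕ) - (j + 1) < M.length := by omega
        simp only [Function.comp, hlhat, dif_neg h1, dif_pos h2]
        have hqe : (⟨j + 1 + (q : ℕ) - (j + 1), h2⟩ : Fin M.length) = q := by
          apply Fin.ext
          show j + 1 + (q : ℕ) - (j + 1) = (q : ℕ)
          omega
        rw [hp, hqe, hq]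
  have hid2 : r k (x ∘ lhat) = r k x := hId k k hkK hkK x lhat hrange2
  have hmid : r j ((x ∘ lhat) ∘ Fin.castLE (by omega : j + 1 ≤ k + 1)) ≤ r k (x ∘ lhat) :=
    prefix_le_aux K r hInc j k (le_trans hjk' hk'k) hkK (x ∘ lhat)
  have hxny : x ∘ n = y ∘ m := rfl
  calc r k' (x ∘ l) = r j (y ∘ m) := hid1.symm
    _ = r j ((x ∘ lhat) ∘ Fin.castLE (by omega : j + 1 ≤ k + 1)) := by rw [hpre, hxny]
    _ ≤ r k (x ∘ lhat) := hmid
    _ = r k x := hid2
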